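/- Combining well-representation with an average error bound: suppose μ is a distribution on a finite set of distributions on X × {0,1} such that for every D in the support of μ there exists D' with μ(D') ≥ p_l and |err_D(h) − err_{D'}(h)| ≤ δ for all h in a class H. Let D₁, …, D_k be i.i.d. from μ, and suppose that (a) every atom D' with μ(D') ≥ p_l appears at least k·p_l/2 times among D₁, …, D_k, and (b) (1/k)∑_{i=1}^k err_{D_i}(h) ≤ β for some h ∈ H. Then for every D in the support of μ, err_D(h) ≤ (2/p_l)·β + δ. -/
import Mathlib


open MeasureTheory
open scoped ENNReal

/-- Combining well-representation with an average error bound: if every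
domain in the support of μ is δ-close in error (uniformly over the class H) to some
atom of μ-mass at least p_l, every such heavy atom appears at least k·p_l/2 times among
the realized domains D₁,…,D_k, and the average error of h over the realized domains is
at most β, then err_D(h) ≤ (2/p_l)·β + δ for every D in the support of μ. -/
theorem well_representation_error_bound {α H : Type*} [MeasurableSpace α] [Fintype α]
    [DecidableEq α] [MeasurableSingletonClass α]
    (μ : Measure α) [IsProbabilityMeasure μ]
    (err : α → H → ℝ) (herr : ∀ a h, err a h ∈ Set.Icc (0 : ℝ) 1)
    (p_l δ β : ℝ) (hpl : 0 < p_l) (hpl1 : p_l < 1) (hδ : 0 ≤ δ) (hβ : 0 ≤ β)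
    {k : ℕ} (hk : 0 < k) (D : Fin k → α)
    (hrep : ∀ a : α, μ {a} ≠ 0 →
      ∃ a' : α, ENNReal.ofReal p_l ≤ μ {a'} ∧ ∀ h : H, |err a h - err a' h| ≤ δ)
    (hcount : ∀ a' : α, ENNReal.ofReal p_l ≤ μ {a'} →
      (k : ℝ) * p_l / 2 ≤ ((Finset.univ.filter (fun i : Fin k => D i = a')).card : ℝ))
    (h : H) (havg : (1 / k : ℝ) * ∑ i, err (D i) h ≤ β) :
    ∀ a : α, μ {a} ≠ 0 → err a h ≤ (2 / p_l) * β + δ := by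
  intro a ha
  obtain ⟨a', ha', hclose⟩ := hrep a ha
  have hcard := hcount a' ha'
  set S := Finset.univ.filter (fun i : Fin k => D i = a') with hS
  have hk' : (0:ℝ) < k := by exact_mod_cast hk
  have hsum : ∑ i, err (D i) h ≤ k * β := by
    have := havg
    rw [one_div, inv_mul_le_iff₀ hk'] at this
    linarith [this]
  have hsub : (S.card : ℝ) * err a' h ≤ ∑ i, err (D i) h := by
    have h1 : ∑ i ∈ S, err (D i) h = (S.card : ℝ) * err a' h := by
      rw [Finset.sum_congr rfl (fun i hi => by
        rw [(Finset.mem_filter.mp hi).2]), Finset.sum_const, nsmul_eq_mul]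
    calc (S.card : ℝ) * err a' h = ∑ i ∈ S, err (D i) h := h1.symm
      _ ≤ ∑ i, err (D i) h := Finset.sum_le_sum_of_subset_of_nonneg
          (Finset.subset_univ S) (fun i _ _ => (herr (D i) h).1)
  have herr' : err a' h ≤ 2 / p_l * β := by
    have h0 : (0:ℝ) ≤ err a' h := (herr a' h).1
    have h2 : (k:ℝ) * p_l / 2 * err a' h ≤ k * β := by
      calc (k:ℝ) * p_l / 2 * err a' h ≤ (S.card : ℝ) * err a' h :=
            mul_le_mul_of_nonneg_right hcard h0
        _ ≤ ∑ i, err (D i) h := hsub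
        _ ≤ k * β := hsum
    have hplk : (0:ℝ) < k * p_l / 2 := by positivity
    rw [div_mul_eq_mul_div, le_div_iff₀ hpl]
    nlinarith
  have := hclose h
  have := abs_le.mp this
  linarith [this.2]
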